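/- For real q > 1 and even n, \eta_n q^{-n/2} \sum over places v of \mathbb{F}_q(X) with deg v | n/2 of \frac{deg v}{1 + q^{-deg v}} = \eta_n (1 - \frac{1}{1+q^{n/2}}) + O(q^{-n/4}), with implied constant depending only on q. -/

import Mathlib

noncomputable section

/-- Monic irreducible polynomials over `F`: the finite places of `F(X)`. -/
def MonicIrred (F : Type) [Field F] : Type := {p : Polynomial F // p.Monic ∧ Irreducible p}

/-- Places of the rational function field `F(X)`: the monic irreducible polynomials
together with the place at infinity (`none`). -/
def FFPlace (F : Type) [Field F] : Type := Option (MonicIrred F)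

/-- Degree of a place. -/
def FFPlace.deg {F : Type} [Field F] : FFPlace F → ℕ
  | none => 1
  | some p => p.1.natDegree

/-- Number of places of `F(X)` of degree `d`. -/
def Nplaces (F : Type) [Field F] (d : ℕ) : ℕ :=
  Nat.card {v : FFPlace F // v.deg = d}

set_option linter.unusedSectionVars false

open Polynomial

namespace Aux

variable (F : Type) [Field F] [Fintype F]

local notation "Ω" => AlgebraicClosure F
local notation "q" => Fintype.card F

lemma one_lt_q : 1 < q := Fintype.one_lt_card

lemma gpoly_ne_zero (m : ℕ) (hm : 0 < m) : (X ^ q ^ m - X : Polynomial F) ≠ 0 :=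
  FiniteField.X_pow_card_sub_X_ne_zero _ (Nat.one_lt_pow hm.ne' (one_lt_q F))

lemma gpoly_natDegree (m : ℕ) (hm : 0 < m) :
    (X ^ q ^ m - X : Polynomial F).natDegree = q ^ m :=
  FiniteField.X_pow_card_sub_X_natDegree_eq _ (Nat.one_lt_pow hm.ne' (one_lt_q F))

lemma gpoly_monic (m : ℕ) (hm : 0 < m) : (X ^ q ^ m - X : Polynomial F).Monic := by
  apply monic_X_pow_sub
  rw [degree_X]
  exact_mod_cast Nat.one_lt_pow hm.ne' (one_lt_q F)

lemma gpoly_separable (m : ℕ) (hm : 0 < m) :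
    Separable (X ^ q ^ m - X : Polynomial F) := by
  haveI : CharP F (ringChar F) := ringChar.charP F
  obtain ⟨k, hprime, hcard⟩ := FiniteField.card F (ringChar F)
  exact galois_poly_separable (ringChar F) (q ^ m) (by
    rw [hcard, ← pow_mul]
    exact dvd_pow_self _ (by positivity))

/-- The fixed-point set as a `rootSet`. -/
lemma fixed_equiv_rootSet (m : ℕ) (hm : 0 < m) :
    Nonempty ({x : Ω // x ^ q ^ m = x} ≃ ((X ^ q ^ m - X : Polynomial F).rootSet Ω)) := by
  refine ⟨Equiv.subtypeEquivRight fun x => ?_⟩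
  rw [mem_rootSet_of_ne (gpoly_ne_zero F m hm)]
  simp [sub_eq_zero]

lemma card_fixed (m : ℕ) (hm : 0 < m) : Nat.card {x : Ω // x ^ q ^ m = x} = q ^ m := by
  obtain ⟨e⟩ := fixed_equiv_rootSet F m hm
  rw [Nat.card_congr e, Nat.card_eq_fintype_card,
    card_rootSet_eq_natDegree (gpoly_separable F m hm) (IsAlgClosed.splits _),
    gpoly_natDegree F m hm]

lemma fixed_finite (m : ℕ) (hm : 0 < m) : Finite {x : Ω // x ^ q ^ m = x} := by
  obtain ⟨e⟩ := fixed_equiv_rootSet F m hm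
  exact Finite.of_equiv _ e.symm

/-- Roots of an irreducible monic polynomial: count. -/
lemma card_roots_irred (p : Polynomial F) (hp : Irreducible p) :
    Nat.card {x : Ω // aeval x p = 0} = p.natDegree := by
  have hne : p ≠ 0 := hp.ne_zero
  have e : {x : Ω // aeval x p = 0} ≃ (p.rootSet Ω) :=
    Equiv.subtypeEquivRight fun x => by rw [mem_rootSet_of_ne hne]
  rw [Nat.card_congr e, Nat.card_eq_fintype_card,
    card_rootSet_eq_natDegree (PerfectField.separable_of_irreducible hp)
      (IsAlgClosed.splits _)]

lemma roots_irred_nonempty (p : Polynomial F) (hp : Irreducible p) :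
    Nonempty {x : Ω // aeval x p = 0} := by
  obtain ⟨x, hx⟩ := IsAlgClosed.exists_aeval_eq_zero Ω p
    (fun h => by
      have := hp.natDegree_pos
      rw [Polynomial.natDegree, h] at this; simp at this)
  exact ⟨x, hx⟩

lemma roots_irred_finite (p : Polynomial F) (hp : Irreducible p) :
    Finite {x : Ω // aeval x p = 0} := by
  have e : {x : Ω // aeval x p = 0} ≃ (p.rootSet Ω) :=
    Equiv.subtypeEquivRight fun x => by rw [mem_rootSet_of_ne hp.ne_zero]
  exact Finite.of_equiv _ e.symm

end Aux

namespace Aux2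
open Aux IntermediateField
variable (F : Type) [Field F] [Fintype F]

local notation "Ω" => AlgebraicClosure F
local notation "q" => Fintype.card F

set_option linter.unusedSectionVars false

lemma natDegree_minpoly_dvd (m : ℕ) (hm : 0 < m) (x : Ω) (hx : x ^ q ^ m = x) :
    (minpoly F x).natDegree ∣ m := by
  set p := ringChar F with hpdef
  haveI : CharP F p := ringChar.charP F
  haveI : CharP Ω p := charP_of_injective_algebraMap (algebraMap F Ω).injective p
  obtain ⟨k, hprime, hcard⟩ := FiniteField.card F p
  haveI : Fact p.Prime := ⟨hprime⟩
  haveI : ExpChar Ω p := ExpChar.prime hprime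
  set E : Subfield Ω := RingHom.eqLocusField (iterateFrobenius Ω p (k * m)) (RingHom.id Ω)
    with hEdef
  have hmem : ∀ y : Ω, y ∈ E ↔ y ^ q ^ m = y := by
    intro y
    show iterateFrobenius Ω p (k * m) y = y ↔ _
    rw [iterateFrobenius_def, pow_mul, ← hcard]
  have hff : ∀ a : F, algebraMap F Ω a ∈ E := by
    intro a
    rw [hmem, ← map_pow, FiniteField.pow_card_pow]
  let f0 : F →+* E := (algebraMap F Ω).codRestrict E.toSubring hff
  letI : Algebra F E := f0.toAlgebra
  haveI : IsScalarTower F E Ω := IsScalarTower.of_algebraMap_eq fun a => rfl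
  have eE : E ≃ {y : Ω // y ^ q ^ m = y} := Equiv.subtypeEquivRight hmem
  haveI : Finite E := by
    haveI := fixed_finite F m hm
    exact Finite.of_equiv _ eE.symm
  haveI : FiniteDimensional F E := Module.Finite.of_finite
  haveI : Fintype E := Fintype.ofFinite E
  have hcardE : Fintype.card E = q ^ Module.finrank F E := Module.card_eq_pow_finrank
  have hcardE2 : Fintype.card E = q ^ m := by
    rw [← Nat.card_eq_fintype_card, Nat.card_congr eE, card_fixed F m hm]
  have hrank : Module.finrank F E = m :=
    Nat.pow_right_injective (one_lt_q F) (hcardE.symm.trans hcardE2)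
  set x' : E := ⟨x, (hmem x).2 hx⟩ with hx'def
  have hxint : IsIntegral F x' := IsIntegral.of_finite F x'
  have hdvd := minpoly.degree_dvd hxint
  rw [hrank] at hdvd
  have hmp : minpoly F x = minpoly F x' := by
    have := minpoly.algebraMap_eq (A := F) (B := ↥E) (B' := Ω) (algebraMap (↥E) Ω).injective x'
    rw [← this]
    rfl
  rwa [hmp]

lemma pow_fixed_of_root (m : ℕ) (p : Polynomial F) (hmonic : p.Monic) (hirr : Irreducible p)
    (hd : p.natDegree ∣ m) (x : Ω) (hx : aeval x p = 0) : x ^ q ^ m = x := by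
  have hint : IsIntegral F x := ⟨p, hmonic, hx⟩
  have hmin : minpoly F x = p := (minpoly.eq_of_irreducible_of_monic hirr hx hmonic).symm
  haveI : FiniteDimensional F F⟮x⟯ := IntermediateField.adjoin.finiteDimensional hint
  have hrank : Module.finrank F F⟮x⟯ = p.natDegree := by
    rw [IntermediateField.adjoin.finrank hint, hmin]
  haveI : Finite F⟮x⟯ := Module.finite_of_finite F
  haveI : Fintype F⟮x⟯ := Fintype.ofFinite _
  have hcardK : Fintype.card F⟮x⟯ = q ^ p.natDegree := by
    rw [Module.card_eq_pow_finrank (K := F) (V := F⟮x⟯), hrank]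
  obtain ⟨t, rfl⟩ := hd
  set gen := IntermediateField.AdjoinSimple.gen F x with hgen
  have h1 : gen ^ (q ^ p.natDegree) ^ t = gen := by
    rw [← hcardK]; exact FiniteField.pow_card_pow t gen
  have h2 : x = algebraMap F⟮x⟯ Ω gen := (IntermediateField.AdjoinSimple.algebraMap_gen F x).symm
  rw [h2, ← map_pow, pow_mul, h1]

end Aux2

namespace Aux3
open Aux Aux2
variable (F : Type) [Field F] [Fintype F]

local notation "Ω" => AlgebraicClosure F
local notation "q" => Fintype.card F

set_option linter.unusedSectionVars false

/-- index type: monic irreducibles of degree dividing m -/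
abbrev Idx (m : ℕ) : Type := {p : MonicIrred F // p.1.natDegree ∣ m}

def tf (m : ℕ) :
    (Σ p : Idx F m, {x : Ω // aeval x p.1.1 = 0}) → {x : Ω // x ^ q ^ m = x} :=
  fun s => ⟨s.2.1, pow_fixed_of_root F m s.1.1.1 s.1.1.2.1 s.1.1.2.2 s.1.2 s.2.1 s.2.2⟩

lemma tf_bijective (m : ℕ) (hm : 0 < m) : Function.Bijective (tf F m) := by
  constructor
  · rintro ⟨⟨⟨p, hpm, hpi⟩, hpd⟩, ⟨x, hx⟩⟩ ⟨⟨⟨p', hpm', hpi'⟩, hpd'⟩, ⟨x', hx'⟩⟩ h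
    simp only [tf, Subtype.mk.injEq] at h
    subst h
    have e1 : p = minpoly F x := minpoly.eq_of_irreducible_of_monic hpi hx hpm
    have e2 : p' = minpoly F x := minpoly.eq_of_irreducible_of_monic hpi' hx' hpm'
    have : p = p' := e1.trans e2.symm
    subst this
    rfl
  · rintro ⟨x, hx⟩
    have hint : IsIntegral F x := ⟨X ^ q ^ m - X, gpoly_monic F m hm, by
      simp [sub_eq_zero, hx]⟩
    refine ⟨⟨⟨⟨minpoly F x, minpoly.monic hint, minpoly.irreducible hint⟩,
      natDegree_minpoly_dvd F m hm x hx⟩, ⟨x, minpoly.aeval F x⟩⟩, rfl⟩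

instance fiber_finite (m : ℕ) (p : Idx F m) : Finite {x : Ω // aeval x p.1.1 = 0} :=
  roots_irred_finite F p.1.1 p.1.2.2

lemma sigma_finite (m : ℕ) (hm : 0 < m) : Finite (Σ p : Idx F m, {x : Ω // aeval x p.1.1 = 0}) := by
  haveI := fixed_finite F m hm
  exact Finite.of_injective _ (tf_bijective F m hm).injective

lemma idx_finite (m : ℕ) (hm : 0 < m) : Finite (Idx F m) := by
  haveI := sigma_finite F m hm
  refine Finite.of_injective
    (fun p : Idx F m => (⟨p, Classical.choice (roots_irred_nonempty F p.1.1 p.1.2.2)⟩ :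
      Σ p : Idx F m, {x : Ω // aeval x p.1.1 = 0})) ?_
  intro a b h
  exact congrArg Sigma.fst h

lemma sub_finite (m d : ℕ) (hm : 0 < m) (hd : d ∣ m) :
    Finite {p : MonicIrred F // p.1.natDegree = d} := by
  haveI := idx_finite F m hm
  exact Finite.of_injective (fun p : {p : MonicIrred F // p.1.natDegree = d} =>
    (⟨p.1, by rw [p.2]; exact hd⟩ : Idx F m)) (fun a b h => by
      apply Subtype.ext
      exact Subtype.mk_eq_mk.mp h)

lemma key (m : ℕ) (hm : 0 < m) :
    ∑ d ∈ m.divisors, d * Nat.card {p : MonicIrred F // p.1.natDegree = d} = q ^ m := by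
  classical
  haveI := idx_finite F m hm
  haveI : Fintype (Idx F m) := Fintype.ofFinite _
  haveI : ∀ p : Idx F m, Fintype {x : Ω // aeval x p.1.1 = 0} := fun p => Fintype.ofFinite _
  have h1 : Fintype.card (Σ p : Idx F m, {x : Ω // aeval x p.1.1 = 0}) = q ^ m := by
    rw [← Nat.card_eq_fintype_card, Nat.card_eq_of_bijective _ (tf_bijective F m hm),
      card_fixed F m hm]
  rw [Fintype.card_sigma] at h1
  have h2 : ∀ p : Idx F m, Fintype.card {x : Ω // aeval x p.1.1 = 0} = p.1.1.natDegree :=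
    fun p => by rw [← Nat.card_eq_fintype_card, card_roots_irred F p.1.1 p.1.2.2]
  simp_rw [h2] at h1
  -- now regroup ∑ p : Idx F m, deg p by degree
  rw [← h1]
  rw [← Finset.sum_fiberwise_of_maps_to (g := fun p : Idx F m => p.1.1.natDegree)
    (t := m.divisors) (fun p _ => Nat.mem_divisors.mpr ⟨p.2, hm.ne'⟩)]
  refine Finset.sum_congr rfl fun d hd => ?_
  obtain ⟨hdvd, -⟩ := Nat.mem_divisors.mp hd
  have e : {p : Idx F m // p.1.1.natDegree = d} ≃ {p : MonicIrred F // p.1.natDegree = d} :=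
    { toFun := fun p => ⟨p.1.1, p.2⟩
      invFun := fun p => ⟨⟨p.1, by rw [p.2]; exact hdvd⟩, p.2⟩
      left_inv := fun p => by ext <;> rfl
      right_inv := fun p => rfl }
  have hsum : ∑ p ∈ Finset.univ.filter (fun p : Idx F m => p.1.1.natDegree = d),
      p.1.1.natDegree
      = (Finset.univ.filter (fun p : Idx F m => p.1.1.natDegree = d)).card * d := by
    rw [Finset.sum_congr rfl (fun p hp => (Finset.mem_filter.mp hp).2), Finset.sum_const,
      smul_eq_mul]
  rw [hsum]
  have hc : (Finset.univ.filter (fun p : Idx F m => p.1.1.natDegree = d)).card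
      = Nat.card {p : MonicIrred F // p.1.natDegree = d} := by
    rw [← Fintype.card_subtype, ← Nat.card_eq_fintype_card, Nat.card_congr e]
  rw [hc, Nat.mul_comm]

end Aux3

namespace Aux4
open Aux Aux2 Aux3
variable (F : Type) [Field F] [Fintype F]

local notation "q" => Fintype.card F

set_option linter.unusedSectionVars false

lemma Nplaces_eq (d : ℕ) (hd : 0 < d) :
    Nplaces F d = Nat.card {p : MonicIrred F // p.1.natDegree = d}
      + (if d = 1 then 1 else 0) := by
  haveI := sub_finite F d d hd dvd_rfl
  by_cases h1 : d = 1
  · subst h1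
    have e : {v : FFPlace F // FFPlace.deg v = 1} ≃ Option {p : MonicIrred F // p.1.natDegree = 1} :=
      { toFun := fun v => match v with
          | ⟨none, _⟩ => none
          | ⟨some p, hv⟩ => some ⟨p, hv⟩
        invFun := fun o => match o with
          | none => ⟨none, rfl⟩
          | some p => ⟨some p.1, p.2⟩
        left_inv := fun v => by rcases v with ⟨_ | p, hv⟩ <;> rfl
        right_inv := fun o => by rcases o with _ | p <;> rfl }
    rw [Nplaces, Nat.card_congr e, Finite.card_option]
    simp
  · have e : {v : FFPlace F // FFPlace.deg v = d} ≃ {p : MonicIrred F // p.1.natDegree = d} :=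
      { toFun := fun v => match v with
          | ⟨none, hv⟩ => False.elim (h1 hv.symm)
          | ⟨some p, hv⟩ => ⟨p, hv⟩
        invFun := fun p => ⟨some p.1, p.2⟩
        left_inv := fun v => by
          rcases v with ⟨_ | p, hv⟩
          · exact False.elim (h1 hv.symm)
          · rfl
        right_inv := fun p => rfl }
    rw [Nplaces, Nat.card_congr e]
    simp [h1]

lemma term_le (d : ℕ) (hd : 0 < d) : d * Nplaces F d ≤ q ^ d + 1 := by
  have h1 : d * Nat.card {p : MonicIrred F // p.1.natDegree = d} ≤ q ^ d := by
    rw [← key F d hd]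
    exact Finset.single_le_sum (f := fun e => e * Nat.card {p : MonicIrred F // p.1.natDegree = e})
      (fun i _ => Nat.zero_le _) (Nat.mem_divisors.mpr ⟨dvd_rfl, hd.ne'⟩)
  rw [Nplaces_eq F d hd, Nat.mul_add]
  have h2 : d * (if d = 1 then 1 else 0) ≤ 1 := by
    by_cases h : d = 1 <;> simp [h]
  omega

lemma sum_places (m : ℕ) (hm : 0 < m) :
    ∑ d ∈ m.divisors, d * Nplaces F d = q ^ m + 1 := by
  have h : ∀ d ∈ m.divisors, d * Nplaces F d
      = d * Nat.card {p : MonicIrred F // p.1.natDegree = d} + (if d = 1 then d else 0) := by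
    intro d hd
    have hd0 : 0 < d := Nat.pos_of_mem_divisors hd
    rw [Nplaces_eq F d hd0, Nat.mul_add]
    by_cases h : d = 1 <;> simp [h]
  rw [Finset.sum_congr rfl h, Finset.sum_add_distrib, key F m hm, Finset.sum_ite_eq' m.divisors 1]
  simp [Nat.one_mem_divisors.mpr hm.ne']

end Aux4

namespace Aux5

lemma analysis (Q : ℝ) (hQ : 2 ≤ Q) (m : ℕ) (hm : 1 ≤ m) (S R : ℝ)
    (hS : S = (Q ^ m + 1) - R) (hR0 : 0 ≤ R) (hR : R ≤ 2 * m) :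
    |(Q ^ m)⁻¹ * S - (1 - 1 / (1 + Q ^ m))| ≤ 6 * Q ^ (-(m : ℝ) / 2) := by
  have hQ0 : (0 : ℝ) < Q := by linarith
  have hQm : (1 : ℝ) ≤ Q ^ m := one_le_pow₀ (by linarith)
  have hQm0 : (0 : ℝ) < Q ^ m := by positivity
  have hB0 : (0 : ℝ) < (Q ^ m)⁻¹ := by positivity
  have h1 : (Q ^ m)⁻¹ * S - (1 - 1 / (1 + Q ^ m))
      = (Q ^ m)⁻¹ + 1 / (1 + Q ^ m) - (Q ^ m)⁻¹ * R := by
    rw [hS]; field_simp; ring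
  rw [h1]
  have hd1 : 1 / (1 + Q ^ m) ≤ (Q ^ m)⁻¹ := by
    rw [one_div]
    exact inv_anti₀ hQm0 (by linarith)
  have hd0 : (0:ℝ) ≤ 1 / (1 + Q ^ m) := by positivity
  have hbr : (Q ^ m)⁻¹ * R ≤ (Q ^ m)⁻¹ * (2 * m) := by
    exact mul_le_mul_of_nonneg_left hR hB0.le
  have hb1 : |(Q ^ m)⁻¹ + 1 / (1 + Q ^ m) - (Q ^ m)⁻¹ * R|
      ≤ (2 + 2 * m) * (Q ^ m)⁻¹ := by
    rw [abs_le]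
    constructor
    · nlinarith [mul_nonneg hB0.le hR0]
    · nlinarith [mul_nonneg hB0.le hR0]
  have hm6 : 2 + 2 * (m : ℝ) ≤ 6 * Q ^ ((m : ℝ) / 2) := by
    have hlog2 : (2:ℝ)/3 ≤ Real.log 2 := by nlinarith [Real.log_two_gt_d9]
    have hlog : (2:ℝ)/3 ≤ Real.log Q :=
      le_trans hlog2 (Real.log_le_log (by norm_num) hQ)
    have hexp : Real.log Q * ((m : ℝ) / 2) + 1 ≤ Q ^ ((m : ℝ) / 2) := by
      rw [Real.rpow_def_of_pos hQ0]
      exact Real.add_one_le_exp _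
    have hm0 : (0:ℝ) ≤ (m:ℝ) := Nat.cast_nonneg m
    nlinarith
  have hrw : Q ^ ((m : ℝ) / 2) * (Q ^ m)⁻¹ = Q ^ (-(m : ℝ) / 2) := by
    rw [← Real.rpow_natCast Q m, ← Real.rpow_neg hQ0.le, ← Real.rpow_add hQ0]
    norm_num
    ring_nf
  calc |(Q ^ m)⁻¹ + 1 / (1 + Q ^ m) - (Q ^ m)⁻¹ * R|
      ≤ (2 + 2 * m) * (Q ^ m)⁻¹ := hb1
    _ ≤ (6 * Q ^ ((m : ℝ) / 2)) * (Q ^ m)⁻¹ := mul_le_mul_of_nonneg_right hm6 hB0.le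
    _ = 6 * (Q ^ ((m : ℝ) / 2) * (Q ^ m)⁻¹) := by ring
    _ = 6 * Q ^ (-(m : ℝ) / 2) := by rw [hrw]

end Aux5

open Aux4 Aux5 in
/-- Main term of the hyperelliptic trace moments: for even `n ≥ 1`,
`q^{-n/2} ∑_{deg v ∣ n/2} deg v/(1+q^{-deg v}) = 1 - 1/(1+q^{n/2}) + O(q^{-n/4})`,
with implied constant depending only on `q`. -/
theorem stmt12 (F : Type) [Field F] [Fintype F] :
    ∃ C : ℝ, ∀ n : ℕ, 1 ≤ n → Even n →
      |(Fintype.card F : ℝ) ^ (-(n : ℝ) / 2)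
            * ∑ d ∈ (n / 2).divisors,
                (Nplaces F d : ℝ) * d / (1 + ((Fintype.card F : ℝ) ^ d)⁻¹)
          - (1 - 1 / (1 + (Fintype.card F : ℝ) ^ ((n : ℝ) / 2)))|
        ≤ C * (Fintype.card F : ℝ) ^ (-(n : ℝ) / 4) := by
  use 6
  intro n hn heven
  obtain ⟨m, rfl⟩ := heven
  have hm : 1 ≤ m := by omega
  set Q : ℝ := (Fintype.card F : ℝ) with hQdef
  have hq : 2 ≤ Fintype.card F := Fintype.one_lt_card
  have hQ : (2 : ℝ) ≤ Q := by rw [hQdef]; exact_mod_cast hq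
  have hQ0 : (0 : ℝ) < Q := by linarith
  have hdiv : (m + m) / 2 = m := by omega
  rw [hdiv]
  have e1 : Q ^ (-((m + m : ℕ) : ℝ) / 2) = (Q ^ m)⁻¹ := by
    push_cast
    rw [show -((m : ℝ) + (m : ℝ)) / 2 = -(m : ℝ) by ring, Real.rpow_neg hQ0.le,
      Real.rpow_natCast]
  have e2 : Q ^ (((m + m : ℕ) : ℝ) / 2) = Q ^ m := by
    push_cast
    rw [show ((m : ℝ) + (m : ℝ)) / 2 = ((m : ℕ) : ℝ) by push_cast; ring, Real.rpow_natCast]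
  have e3 : Q ^ (-((m + m : ℕ) : ℝ) / 4) = Q ^ (-(m : ℝ) / 2) := by
    congr 1
    push_cast
    ring
  rw [e1, e2, e3]
  set R : ℝ := ∑ d ∈ m.divisors, (Nplaces F d : ℝ) * d * (Q ^ d)⁻¹ / (1 + (Q ^ d)⁻¹) with hRdef
  have hterm : ∀ d ∈ m.divisors, (Nplaces F d : ℝ) * d / (1 + (Q ^ d)⁻¹)
      = (Nplaces F d : ℝ) * d - (Nplaces F d : ℝ) * d * (Q ^ d)⁻¹ / (1 + (Q ^ d)⁻¹) := by
    intro d hd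
    have h0 : (0 : ℝ) < Q ^ d := by positivity
    have h1 : (0 : ℝ) < 1 + (Q ^ d)⁻¹ := by positivity
    field_simp
    ring
  have hsum : ∑ d ∈ m.divisors, (Nplaces F d : ℝ) * d / (1 + (Q ^ d)⁻¹) = (Q ^ m + 1) - R := by
    rw [Finset.sum_congr rfl hterm, Finset.sum_sub_distrib]
    congr 1
    calc ∑ d ∈ m.divisors, (Nplaces F d : ℝ) * d
        = ((∑ d ∈ m.divisors, d * Nplaces F d : ℕ) : ℝ) := by
          push_cast
          exact Finset.sum_congr rfl (fun _ _ => by ring)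
      _ = ((Fintype.card F ^ m + 1 : ℕ) : ℝ) := by rw [sum_places F m hm]
      _ = Q ^ m + 1 := by push_cast; ring
  have hR0 : 0 ≤ R := by
    apply Finset.sum_nonneg
    intro d hd
    have h0 : (0 : ℝ) < Q ^ d := by positivity
    positivity
  have hRle : R ≤ 2 * m := by
    have hcard : m.divisors.card ≤ m := by
      have hsub : m.divisors ⊆ Finset.Icc 1 m := by
        intro d hd
        rw [Finset.mem_Icc]
        exact ⟨Nat.pos_of_mem_divisors hd, Nat.le_of_dvd hm (Nat.mem_divisors.mp hd).1⟩
      calc m.divisors.card ≤ (Finset.Icc 1 m).card := Finset.card_le_card hsub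
        _ = m := by rw [Nat.card_Icc]; omega
    calc R ≤ ∑ d ∈ m.divisors, 2 := by
          apply Finset.sum_le_sum
          intro d hd
          have hd0 : 0 < d := Nat.pos_of_mem_divisors hd
          have h0 : (0 : ℝ) < Q ^ d := by positivity
          have h1 : (0 : ℝ) < 1 + (Q ^ d)⁻¹ := by positivity
          have hu1 : (Q ^ d)⁻¹ ≤ 1 := by
            rw [inv_le_one_iff₀]
            right
            exact one_le_pow₀ (by linarith)
          have ha : (Nplaces F d : ℝ) * d ≤ Q ^ d + 1 := by
            have := term_le F d hd0
            calc (Nplaces F d : ℝ) * d = ((d * Nplaces F d : ℕ) : ℝ) := by push_cast; ring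
              _ ≤ ((Fintype.card F ^ d + 1 : ℕ) : ℝ) := by exact_mod_cast this
              _ = Q ^ d + 1 := by push_cast; ring
          have ha0 : (0 : ℝ) ≤ (Nplaces F d : ℝ) * d := by positivity
          rw [div_le_iff₀ h1]
          have hQdu : Q ^ d * (Q ^ d)⁻¹ = 1 := mul_inv_cancel₀ h0.ne'
          nlinarith [inv_pos.mpr h0]
      _ = 2 * m.divisors.card := by rw [Finset.sum_const, nsmul_eq_mul]; ring
      _ ≤ 2 * m := by exact_mod_cast Nat.mul_le_mul_left 2 hcard
  exact Aux5.analysis Q hQ m hm _ R hsum hR0 hRle
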